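/- arXiv:2111.04553 — 2 statements merged into one kernel-verified Lean document; each statement's English description precedes it below -/
import Mathlib

section
/- Suppose the equation x(k+1) = A(k)x(k) has an exponential dichotomy on ℤ₋ with projection P(k). Then: (a) the unstable subspace N(P(0)) is uniquely determined, i.e. if the equation also has an exponential dichotomy on ℤ₋ with projection Q(k), then N(Q(0)) = N(P(0)); (b) for every subspace W of ℝⁿ with W ⊕ N(P(0)) = ℝⁿ there exists a unique projection family Q(k), k ∈ ℤ₋, satisfying the invariance Q(k+1)A(k) = A(k)Q(k), such that R(Q(0)) = W and the equation has an exponential dichotomy on ℤ₋ with projection Q(k) (for some constants); moreover this Q(k) satisfies N(Q(k)) = N(P(k)) for all k ≤ 0. -/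
noncomputable section

open scoped BigOperators

/-- ℝⁿ as a Euclidean space. -/
abbrev Euc (n : ℕ) := EuclideanSpace ℝ (Fin n)

/-- The transition matrix `Φ(k,m) = A(k-1) ⋯ A(m)`, with `Φ(m,m) = 1`
(and `Φ(k,m) = 1` when `k ≤ m`). -/
def Phi {n : ℕ} (A : ℤ → (Euc n →L[ℝ] Euc n)) (k m : ℤ) : Euc n →L[ℝ] Euc n :=
  (((List.range (k - m).toNat).map fun i => A (m + i)).reverse).prod

/-- `J` is an interval of integers. -/
def IsIntInterval (J : Set ℤ) : Prop :=
  ∀ ⦃a b c : ℤ⦄, a ∈ J → b ∈ J → a ≤ c → c ≤ b → c ∈ J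

/-- The equation `x(k+1) = A(k) x(k)` has an exponential dichotomy on `J` with
projection family `P`, constant `K` and exponent `α`. -/
structure ExpDichotomyOn {n : ℕ} (A : ℤ → (Euc n →L[ℝ] Euc n)) (J : Set ℤ)
    (P : ℤ → (Euc n →L[ℝ] Euc n)) (K α : ℝ) : Prop where
  one_le_K : 1 ≤ K
  alpha_pos : 0 < α
  proj : ∀ k ∈ J, P k ∘L P k = P k
  rank_const : ∀ k ∈ J, ∀ m ∈ J,
    Module.finrank ℝ (LinearMap.range (P k : Euc n →ₗ[ℝ] Euc n)) = Module.finrank ℝ (LinearMap.range (P m : Euc n →ₗ[ℝ] Euc n))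
  invariance : ∀ m ∈ J, ∀ k ∈ J, m ≤ k → Phi A k m ∘L P m = P k ∘L Phi A k m
  forward : ∀ m ∈ J, ∀ k ∈ J, m ≤ k →
    ‖Phi A k m ∘L P m‖ ≤ K * Real.exp (-α * ((k : ℝ) - (m : ℝ)))
  bijOn : ∀ k : ℤ, k ∈ J → k + 1 ∈ J →
    Set.BijOn (A k) (LinearMap.ker (P k : Euc n →ₗ[ℝ] Euc n) : Set (Euc n)) (LinearMap.ker (P (k + 1) : Euc n →ₗ[ℝ] Euc n) : Set (Euc n))
  backward : ∃ Ψ : ℤ → ℤ → (Euc n →L[ℝ] Euc n), ∀ m ∈ J, ∀ k ∈ J, m ≤ k →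
    (∀ x ∈ LinearMap.ker (P m : Euc n →ₗ[ℝ] Euc n), Ψ m k (Phi A k m x) = x) ∧
    (∀ x ∈ LinearMap.ker (P k : Euc n →ₗ[ℝ] Euc n), Ψ m k x ∈ LinearMap.ker (P m : Euc n →ₗ[ℝ] Euc n) ∧ Phi A k m (Ψ m k x) = x) ∧
    ‖Ψ m k ∘L (1 - P k)‖ ≤ K * Real.exp (-α * ((k : ℝ) - (m : ℝ)))

/-! ### Auxiliary lemmas on the transition matrices -/

lemma phi_eq {n : ℕ} (A : ℤ → (Euc n →L[ℝ] Euc n)) (k m : ℤ) :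
    Phi A k m = (((List.range (k - m).toNat).map (fun i : ℕ => A (m + (i : ℤ)))).reverse).prod := by
  simp only [Phi, List.bind_eq_flatMap, List.pure_def, ← List.map_eq_flatMap, List.map_map,
    Function.comp_def]

lemma phi_self {n : ℕ} (A : ℤ → (Euc n →L[ℝ] Euc n)) (m : ℤ) : Phi A m m = 1 := by
  simp [phi_eq]

lemma phi_succ {n : ℕ} (A : ℤ → (Euc n →L[ℝ] Euc n)) {m k : ℤ} (h : m ≤ k) :
    Phi A (k + 1) m = A k ∘L Phi A k m := by
  have h1 : (k + 1 - m).toNat = (k - m).toNat + 1 := by omega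
  rw [phi_eq, phi_eq, h1, List.range_succ, List.map_append, List.reverse_append]
  have h3 : m + max (k - m) 0 = k := by omega
  simp [h3, ContinuousLinearMap.mul_def]

lemma phi_comp {n : ℕ} (A : ℤ → (Euc n →L[ℝ] Euc n)) {l m k : ℤ} (hlm : l ≤ m) (hmk : m ≤ k) :
    Phi A k m ∘L Phi A m l = Phi A k l := by
  refine Int.le_induction (motive := fun k _ => Phi A k m ∘L Phi A m l = Phi A k l) ?_ ?_ k hmk
  · show Phi A m m ∘L Phi A m l = Phi A m l
    rw [phi_self]; exact (Phi A m l).id_comp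
  · intro k hk ih
    show Phi A (k + 1) m ∘L Phi A m l = Phi A (k + 1) l
    rw [phi_succ A hk, phi_succ A (hlm.trans hk), ContinuousLinearMap.comp_assoc, ih]

lemma phi_succ' {n : ℕ} (A : ℤ → (Euc n →L[ℝ] Euc n)) {m k : ℤ} (h : m + 1 ≤ k) :
    Phi A k (m + 1) ∘L A m = Phi A k m := by
  have h2 : Phi A (m + 1) m = A m := by
    rw [phi_succ A le_rfl, phi_self]; exact (A m).comp_id
  rw [← h2, phi_comp A (by omega) h]

/-! ### Generalities on dichotomies on `ℤ₋` -/

section Dicho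

variable {n : ℕ} {A P : ℤ → (Euc n →L[ℝ] Euc n)} {K α : ℝ}

/-- The transition matrices map kernels of the projections to kernels. -/
lemma ED.mapsTo_ker (hED : ExpDichotomyOn A {k : ℤ | k ≤ 0} P K α) {m k : ℤ} (hmk : m ≤ k)
    (hk : k ≤ 0) {x : Euc n} (hx : x ∈ LinearMap.ker (P m : Euc n →ₗ[ℝ] Euc n)) :
    Phi A k m x ∈ LinearMap.ker (P k : Euc n →ₗ[ℝ] Euc n) := by
  have hm : m ≤ (0 : ℤ) := hmk.trans hk
  have h := hED.invariance m hm k hk hmk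
  have hx0 : P m x = 0 := LinearMap.mem_ker.1 hx
  have : (P k ∘L Phi A k m) x = (Phi A k m ∘L P m) x := by rw [h]
  simp only [ContinuousLinearMap.comp_apply, hx0, map_zero] at this
  exact LinearMap.mem_ker.2 this

/-- Full invariance of a family `Q` satisfying the one-step invariance relation. -/
lemma inv_full {Q : ℤ → (Euc n →L[ℝ] Euc n)}
    (hQ : ∀ k : ℤ, k + 1 ≤ 0 → Q (k + 1) ∘L A k = A k ∘L Q k)
    {m k : ℤ} (hmk : m ≤ k) (hk : k ≤ 0) :
    Phi A k m ∘L Q m = Q k ∘L Phi A k m := by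
  revert hk
  refine Int.le_induction
    (motive := fun k _ => k ≤ 0 → Phi A k m ∘L Q m = Q k ∘L Phi A k m) ?_ ?_ k hmk
  · intro _
    rw [phi_self]; exact ((Q m).id_comp).trans ((Q m).comp_id).symm
  · intro k hk ih h1
    have hk0 : k ≤ 0 := by omega
    calc Phi A (k + 1) m ∘L Q m = (A k ∘L Phi A k m) ∘L Q m := by rw [phi_succ A hk]
      _ = A k ∘L (Phi A k m ∘L Q m) := by rw [ContinuousLinearMap.comp_assoc]
      _ = A k ∘L (Q k ∘L Phi A k m) := by rw [ih hk0]
      _ = (A k ∘L Q k) ∘L Phi A k m := by rw [ContinuousLinearMap.comp_assoc]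
      _ = (Q (k + 1) ∘L A k) ∘L Phi A k m := by rw [hQ k h1]
      _ = Q (k + 1) ∘L Phi A (k + 1) m := by
          rw [ContinuousLinearMap.comp_assoc, ← phi_succ A hk]

/-- Characterization of the unstable subspaces: `x ∈ N(P(k))` iff there is a bounded
backward solution through `(k, x)`. -/
lemma ker_char (hED : ExpDichotomyOn A {k : ℤ | k ≤ 0} P K α) {k : ℤ} (hk : k ≤ 0) (x : Euc n) :
    x ∈ LinearMap.ker (P k : Euc n →ₗ[ℝ] Euc n) ↔
      ∃ f : ℤ → Euc n, f k = x ∧ (∀ m, m < k → f (m + 1) = A m (f m)) ∧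
        ∃ C : ℝ, ∀ m ≤ k, ‖f m‖ ≤ C := by
  obtain ⟨Ψ, hΨ⟩ := hED.backward
  constructor
  · intro hx
    have hx0 : P k x = 0 := LinearMap.mem_ker.1 hx
    refine ⟨fun m => Ψ m k x, ?_, ?_, K * ‖x‖, ?_⟩
    · show Ψ k k x = x
      have h1 := (hΨ k hk k hk le_rfl).1 x hx
      rwa [phi_self, ContinuousLinearMap.one_apply] at h1
    · intro m hm
      show Ψ (m + 1) k x = A m (Ψ m k x)
      have hm0 : m ≤ (0 : ℤ) := by omega
      have hm1 : m + 1 ≤ (0 : ℤ) := by omega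
      have h2 := (hΨ m hm0 k hk hm.le).2.1 x hx
      have hy : A m (Ψ m k x) ∈ LinearMap.ker (P (m + 1) : Euc n →ₗ[ℝ] Euc n) :=
        (hED.bijOn m hm0 hm1).mapsTo h2.1
      have hphi : Phi A k (m + 1) (A m (Ψ m k x)) = x := by
        calc Phi A k (m + 1) (A m (Ψ m k x)) = (Phi A k (m + 1) ∘L A m) (Ψ m k x) := rfl
          _ = Phi A k m (Ψ m k x) := by rw [phi_succ' A (by omega)]
          _ = x := h2.2
      have h3 := (hΨ (m + 1) hm1 k hk (by omega)).1 _ hy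
      rw [hphi] at h3
      exact h3
    · intro m hm
      show ‖Ψ m k x‖ ≤ K * ‖x‖
      have hK0 : (0 : ℝ) ≤ K := le_trans zero_le_one hED.one_le_K
      have hm0 : m ≤ (0 : ℤ) := hm.trans hk
      have h4 : Ψ m k x = (Ψ m k ∘L (1 - P k)) x := by
        simp [ContinuousLinearMap.sub_apply, hx0]
      have h5 := (hΨ m hm0 k hk hm).2.2
      have hexp : Real.exp (-α * ((k : ℝ) - (m : ℝ))) ≤ 1 := by
        rw [Real.exp_le_one_iff]
        have hmk : (m : ℝ) ≤ (k : ℝ) := by exact_mod_cast hm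
        nlinarith [hED.alpha_pos]
      calc ‖Ψ m k x‖ = ‖(Ψ m k ∘L (1 - P k)) x‖ := by rw [← h4]
        _ ≤ ‖Ψ m k ∘L (1 - P k)‖ * ‖x‖ := ContinuousLinearMap.le_opNorm _ _
        _ ≤ (K * Real.exp (-α * ((k : ℝ) - (m : ℝ)))) * ‖x‖ :=
            mul_le_mul_of_nonneg_right h5 (norm_nonneg x)
        _ = (K * ‖x‖) * Real.exp (-α * ((k : ℝ) - (m : ℝ))) := by ring
        _ ≤ (K * ‖x‖) * 1 :=
            mul_le_mul_of_nonneg_left hexp (mul_nonneg hK0 (norm_nonneg x))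
        _ = K * ‖x‖ := mul_one _
  · rintro ⟨f, hfk, hrec, C, hbd⟩
    have hC : 0 ≤ C := (norm_nonneg (f k)).trans (hbd k le_rfl)
    have hK0 : (0 : ℝ) ≤ K := le_trans zero_le_one hED.one_le_K
    have key : ∀ m ≤ k, Phi A k m (f m) = x := by
      intro m hm
      have hstep : ∀ j, m ≤ j → j ≤ k → Phi A j m (f m) = f j := by
        intro j hj
        refine Int.le_induction (motive := fun j _ => j ≤ k → Phi A j m (f m) = f j) ?_ ?_ j hj
        · intro _; rw [phi_self]; rfl
        · intro j hj ih hjk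
          rw [phi_succ A hj, hrec j (by omega)]
          have := ih (by omega)
          calc (A j ∘L Phi A j m) (f m) = A j (Phi A j m (f m)) := rfl
            _ = A j (f j) := by rw [this]
      rw [hstep k hm le_rfl, hfk]
    have hb : ∀ j : ℕ, ‖P k x‖ ≤ K * C * Real.exp (-α) ^ j := by
      intro j
      have hm : k - (j : ℤ) ≤ k := by omega
      have hm0 : k - (j : ℤ) ≤ 0 := by omega
      have h2 := hED.invariance (k - (j : ℤ)) hm0 k hk hm
      have h1 : P k x = (Phi A k (k - (j : ℤ)) ∘L P (k - (j : ℤ))) (f (k - (j : ℤ))) := by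
        calc P k x = P k (Phi A k (k - (j : ℤ)) (f (k - (j : ℤ)))) := by rw [key _ hm]
          _ = (P k ∘L Phi A k (k - (j : ℤ))) (f (k - (j : ℤ))) := rfl
          _ = _ := by rw [← h2]
      have h3 := hED.forward (k - (j : ℤ)) hm0 k hk hm
      have hcast : -α * ((k : ℝ) - ((k - (j : ℤ) : ℤ) : ℝ)) = (j : ℕ) * (-α) := by
        push_cast; ring
      rw [hcast, Real.exp_nat_mul] at h3
      rw [h1]
      calc ‖(Phi A k (k - (j : ℤ)) ∘L P (k - (j : ℤ))) (f (k - (j : ℤ)))‖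
          ≤ ‖Phi A k (k - (j : ℤ)) ∘L P (k - (j : ℤ))‖ * ‖f (k - (j : ℤ))‖ :=
            ContinuousLinearMap.le_opNorm _ _
        _ ≤ (K * Real.exp (-α) ^ j) * C := by
            refine mul_le_mul h3 (hbd _ hm) (norm_nonneg _) ?_
            exact mul_nonneg hK0 (pow_nonneg (Real.exp_nonneg _) _)
        _ = K * C * Real.exp (-α) ^ j := by ring
    have hlim : Filter.Tendsto (fun j : ℕ => K * C * Real.exp (-α) ^ j)
        Filter.atTop (nhds 0) := by
      have h0 : Real.exp (-α) < 1 := by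
        rw [Real.exp_lt_one_iff]
        linarith [hED.alpha_pos]
      have := (tendsto_pow_atTop_nhds_zero_of_lt_one (Real.exp_nonneg _) h0).const_mul (K * C)
      simpa using this
    have hle : ‖P k x‖ ≤ 0 := ge_of_tendsto' hlim hb
    exact LinearMap.mem_ker.2 (norm_le_zero_iff.1 hle)

end Dicho

/-! ### Continuous projections onto a subspace along a complement -/

open scoped Classical in
/-- The continuous projection onto `p` along `q` (or `0` if `p`, `q` are not complementary). -/
def projCLM {n : ℕ} (p q : Submodule ℝ (Euc n)) : Euc n →L[ℝ] Euc n :=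
  if h : IsCompl p q then
    LinearMap.toContinuousLinearMap (p.subtype ∘ₗ (p.projectionOnto q h)) else 0

section Proj

variable {n : ℕ} {p q : Submodule ℝ (Euc n)}

lemma projCLM_apply (h : IsCompl p q) (x : Euc n) :
    projCLM p q x = (p.projectionOnto q h x : Euc n) := by
  rw [projCLM, dif_pos h]
  simp

lemma projCLM_mem (h : IsCompl p q) (x : Euc n) : projCLM p q x ∈ p := by
  rw [projCLM_apply h]; exact Submodule.coe_mem _

lemma projCLM_left (h : IsCompl p q) {x : Euc n} (hx : x ∈ p) : projCLM p q x = x := by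
  rw [projCLM_apply h]
  rw [Submodule.projectionOnto_apply_of_mem_left h hx]

lemma projCLM_right (h : IsCompl p q) {x : Euc n} (hx : x ∈ q) : projCLM p q x = 0 := by
  rw [projCLM_apply h]
  rw [Submodule.projectionOnto_apply_of_mem_right h hx]
  rfl

lemma projCLM_proj (h : IsCompl p q) : projCLM p q ∘L projCLM p q = projCLM p q :=
  ContinuousLinearMap.ext fun x => projCLM_left h (projCLM_mem h x)

lemma projCLM_range (h : IsCompl p q) : LinearMap.range (projCLM p q : Euc n →ₗ[ℝ] Euc n) = p := by
  apply le_antisymm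
  · rintro y ⟨x, rfl⟩
    exact projCLM_mem h x
  · intro y hy
    exact ⟨y, projCLM_left h hy⟩

lemma projCLM_ker (h : IsCompl p q) : LinearMap.ker (projCLM p q : Euc n →ₗ[ℝ] Euc n) = q := by
  ext x
  constructor
  · intro hx
    have hx0 : projCLM p q x = 0 := LinearMap.mem_ker.1 hx
    obtain ⟨a, b, ha, hb, hab⟩ := Submodule.codisjoint_iff_exists_add_eq.mp h.codisjoint x
    have : projCLM p q x = a := by
      rw [← hab, map_add, projCLM_left h ha, projCLM_right h hb, add_zero]
    rw [hx0] at this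
    rw [← hab, ← this, zero_add]; exact hb
  · intro hx
    exact LinearMap.mem_ker.2 (projCLM_right h hx)

end Proj

/-- Two continuous projections with the same range and kernel coincide. -/
lemma proj_ext {n : ℕ} {T T' : Euc n →L[ℝ] Euc n}
    (hT : T ∘L T = T) (hT' : T' ∘L T' = T')
    (hr : LinearMap.range (T : Euc n →ₗ[ℝ] Euc n) = LinearMap.range (T' : Euc n →ₗ[ℝ] Euc n))
    (hk : LinearMap.ker (T : Euc n →ₗ[ℝ] Euc n) = LinearMap.ker (T' : Euc n →ₗ[ℝ] Euc n)) :
    T = T' := by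
  have hTT : ∀ y, T (T y) = T y := fun y => by
    conv_rhs => rw [← hT]
    rfl
  have hTT' : ∀ y, T' (T' y) = T' y := fun y => by
    conv_rhs => rw [← hT']
    rfl
  refine ContinuousLinearMap.ext fun x => ?_
  have h2 : x - T x ∈ LinearMap.ker (T : Euc n →ₗ[ℝ] Euc n) := by
    simp [LinearMap.mem_ker, map_sub, hTT x]
  have h3 : T' (x - T x) = 0 := by
    rw [hk] at h2
    simpa using h2
  have h4 : T' (T x) = T x := by
    have : T x ∈ LinearMap.range (T' : Euc n →ₗ[ℝ] Euc n) := by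
      rw [← hr]; exact ⟨x, rfl⟩
    obtain ⟨y, hy⟩ := this
    simp only [ContinuousLinearMap.coe_coe] at hy
    rw [← hy, hTT' y]
  calc T x = T' (T x) + T' (x - T x) := by rw [h3, h4, add_zero]
    _ = T' x := by rw [← map_add]; congr 1; abel

/-! ### The candidate stable subspaces determined by a complement `W` of `N(P(0))` -/

/-- The subspace of points whose forward image at time `0` lies in `W`. -/
def Sk {n : ℕ} (A : ℤ → (Euc n →L[ℝ] Euc n)) (W : Submodule ℝ (Euc n)) (k : ℤ) :
    Submodule ℝ (Euc n) :=
  Submodule.comap ((Phi A 0 k : Euc n →L[ℝ] Euc n) : Euc n →ₗ[ℝ] Euc n) W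

lemma mem_Sk {n : ℕ} {A : ℤ → (Euc n →L[ℝ] Euc n)} {W : Submodule ℝ (Euc n)} {k : ℤ}
    {x : Euc n} : x ∈ Sk A W k ↔ Phi A 0 k x ∈ W := by
  simp [Sk, Submodule.mem_comap]

lemma Sk_zero {n : ℕ} (A : ℤ → (Euc n →L[ℝ] Euc n)) (W : Submodule ℝ (Euc n)) :
    Sk A W 0 = W := by
  ext x; rw [mem_Sk, phi_self]; simp

section Main

variable {n : ℕ} {A P : ℤ → (Euc n →L[ℝ] Euc n)} {K α : ℝ}

lemma Sk_compl (hED : ExpDichotomyOn A {k : ℤ | k ≤ 0} P K α) {W : Submodule ℝ (Euc n)}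
    (hW : IsCompl W (LinearMap.ker (P 0 : Euc n →ₗ[ℝ] Euc n))) {k : ℤ} (hk : k ≤ 0) :
    IsCompl (Sk A W k) (LinearMap.ker (P k : Euc n →ₗ[ℝ] Euc n)) := by
  obtain ⟨Ψ, hΨ⟩ := hED.backward
  constructor
  · rw [Submodule.disjoint_def]
    intro x hxS hxK
    have h1 : Phi A 0 k x ∈ W := mem_Sk.1 hxS
    have h2 : Phi A 0 k x ∈ LinearMap.ker (P 0 : Euc n →ₗ[ℝ] Euc n) := ED.mapsTo_ker hED hk le_rfl hxK
    have h3 : Phi A 0 k x = 0 := Submodule.disjoint_def.1 hW.disjoint _ h1 h2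
    have h4 := (hΨ k hk 0 (le_refl (0:ℤ)) hk).1 x hxK
    rw [h3, map_zero] at h4
    exact h4.symm
  · rw [codisjoint_iff, eq_top_iff]
    intro x _
    obtain ⟨w, u, hw, hu, hwu⟩ :=
      Submodule.codisjoint_iff_exists_add_eq.mp hW.codisjoint (Phi A 0 k x)
    obtain ⟨hv1, hv2⟩ := (hΨ k hk 0 (le_refl (0:ℤ)) hk).2.1 u hu
    refine Submodule.mem_sup.2 ⟨x - Ψ k 0 u, ?_, Ψ k 0 u, hv1, by abel⟩
    rw [mem_Sk, map_sub, hv2, ← hwu, add_sub_cancel_right]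
    exact hw

end Main

/-- Rank–nullity for continuous endomorphisms of `ℝⁿ`. -/
lemma rank_nullity_clm {n : ℕ} (T : Euc n →L[ℝ] Euc n) :
    Module.finrank ℝ (LinearMap.range (T : Euc n →ₗ[ℝ] Euc n)) + Module.finrank ℝ (LinearMap.ker (T : Euc n →ₗ[ℝ] Euc n)) = n := by
  have := LinearMap.finrank_range_add_finrank_ker (T : Euc n →ₗ[ℝ] Euc n)
  simpa using this

/-- for an exponential dichotomy on `ℤ₋` with projection `P`:
(a) the unstable subspace `N(P(0))` is uniquely determined;
(b) for every complement `W` of `N(P(0))` there is a unique invariant projection family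
`Q` with `R(Q(0)) = W` with respect to which the equation has an exponential dichotomy
on `ℤ₋`; moreover `N(Q(k)) = N(P(k))` for all `k ≤ 0`. -/
theorem statement5 {n : ℕ} (A P : ℤ → (Euc n →L[ℝ] Euc n)) (K α : ℝ)
    (hED : ExpDichotomyOn A {k : ℤ | k ≤ 0} P K α) :
    (∀ (Q : ℤ → (Euc n →L[ℝ] Euc n)) (K' α' : ℝ),
        ExpDichotomyOn A {k : ℤ | k ≤ 0} Q K' α' →
        LinearMap.ker (Q 0 : Euc n →ₗ[ℝ] Euc n) = LinearMap.ker (P 0 : Euc n →ₗ[ℝ] Euc n)) ∧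
    (∀ W : Submodule ℝ (Euc n), IsCompl W (LinearMap.ker (P 0 : Euc n →ₗ[ℝ] Euc n)) →
      (∃ Q : ℤ → (Euc n →L[ℝ] Euc n),
        (∀ k : ℤ, k + 1 ≤ 0 → Q (k + 1) ∘L A k = A k ∘L Q k) ∧
        LinearMap.range (Q 0 : Euc n →ₗ[ℝ] Euc n) = W ∧
        (∃ K' α' : ℝ, ExpDichotomyOn A {k : ℤ | k ≤ 0} Q K' α') ∧
        (∀ k : ℤ, k ≤ 0 → LinearMap.ker (Q k : Euc n →ₗ[ℝ] Euc n) = LinearMap.ker (P k : Euc n →ₗ[ℝ] Euc n))) ∧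
      (∀ Q Q' : ℤ → (Euc n →L[ℝ] Euc n),
        ((∀ k : ℤ, k + 1 ≤ 0 → Q (k + 1) ∘L A k = A k ∘L Q k) ∧ LinearMap.range (Q 0 : Euc n →ₗ[ℝ] Euc n) = W ∧
          ∃ K' α' : ℝ, ExpDichotomyOn A {k : ℤ | k ≤ 0} Q K' α') →
        ((∀ k : ℤ, k + 1 ≤ 0 → Q' (k + 1) ∘L A k = A k ∘L Q' k) ∧ LinearMap.range (Q' 0 : Euc n →ₗ[ℝ] Euc n) = W ∧
          ∃ K' α' : ℝ, ExpDichotomyOn A {k : ℤ | k ≤ 0} Q' K' α') →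
        ∀ k : ℤ, k ≤ 0 → Q k = Q' k)) := by
  have hK0 : (0 : ℝ) ≤ K := le_trans zero_le_one hED.one_le_K
  constructor
  · -- (a) uniqueness of the unstable subspace
    intro Q K' α' hQ
    refine SetLike.ext fun x => ?_
    rw [ker_char hQ le_rfl x, ker_char hED le_rfl x]
  · -- (b)
    intro W hW
    have hcompl : ∀ k : ℤ, k ≤ 0 → IsCompl (Sk A W k) (LinearMap.ker (P k : Euc n →ₗ[ℝ] Euc n)) :=
      fun k hk => Sk_compl hED hW hk
    obtain ⟨Ψ, hΨ⟩ := hED.backward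
    have hPnorm : ∀ k : ℤ, k ≤ 0 → ‖P k‖ ≤ K := by
      intro k hk
      have h := hED.forward k hk k hk le_rfl
      rw [phi_self, ContinuousLinearMap.one_def, ContinuousLinearMap.id_comp] at h
      have hz : -α * ((k : ℝ) - (k : ℝ)) = 0 := by ring
      rw [hz, Real.exp_zero, mul_one] at h
      exact h
    constructor
    · -- existence
      set Q : ℤ → (Euc n →L[ℝ] Euc n) :=
        fun k => projCLM (Sk A W k) (LinearMap.ker (P k : Euc n →ₗ[ℝ] Euc n)) with hQdef
      have hQrange : ∀ k : ℤ, k ≤ 0 → LinearMap.range (Q k : Euc n →ₗ[ℝ] Euc n) = Sk A W k :=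
        fun k hk => projCLM_range (hcompl k hk)
      have hQker : ∀ k : ℤ, k ≤ 0 → LinearMap.ker (Q k : Euc n →ₗ[ℝ] Euc n) = LinearMap.ker (P k : Euc n →ₗ[ℝ] Euc n) :=
        fun k hk => projCLM_ker (hcompl k hk)
      have hQproj : ∀ k : ℤ, k ≤ 0 → Q k ∘L Q k = Q k :=
        fun k hk => projCLM_proj (hcompl k hk)
      have hAmapS : ∀ k : ℤ, k + 1 ≤ 0 → ∀ x ∈ Sk A W k, A k x ∈ Sk A W (k + 1) := by
        intro k hk1 x hx
        rw [mem_Sk] at hx ⊢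
        have hps := phi_succ' A (show k + 1 ≤ (0 : ℤ) from hk1)
        have : Phi A 0 (k + 1) (A k x) = Phi A 0 k x := by
          calc Phi A 0 (k + 1) (A k x) = (Phi A 0 (k + 1) ∘L A k) x := rfl
            _ = Phi A 0 k x := by rw [hps]
        rw [this]; exact hx
      have hQinv1 : ∀ k : ℤ, k + 1 ≤ 0 → Q (k + 1) ∘L A k = A k ∘L Q k := by
        intro k hk1
        have hk : k ≤ 0 := by omega
        refine ContinuousLinearMap.ext fun x => ?_
        obtain ⟨s, u, hs, hu, hsu⟩ :=
          Submodule.codisjoint_iff_exists_add_eq.mp (hcompl k hk).codisjoint x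
        have h1 : Q k x = s := by
          rw [← hsu, map_add, projCLM_left (hcompl k hk) hs,
            projCLM_right (hcompl k hk) hu, add_zero]
        have hAu : A k u ∈ LinearMap.ker (P (k + 1) : Euc n →ₗ[ℝ] Euc n) := (hED.bijOn k hk hk1).mapsTo hu
        have h2 : Q (k + 1) (A k x) = A k s := by
          rw [← hsu, map_add, map_add,
            projCLM_left (hcompl (k + 1) hk1) (hAmapS k hk1 s hs),
            projCLM_right (hcompl (k + 1) hk1) hAu, add_zero]
        calc (Q (k + 1) ∘L A k) x = Q (k + 1) (A k x) := rfl
          _ = A k s := h2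
          _ = A k (Q k x) := by rw [h1]
          _ = (A k ∘L Q k) x := rfl
      have hQP : ∀ k : ℤ, k ≤ 0 → Q k ∘L P k = Q k := by
        intro k hk
        refine ContinuousLinearMap.ext fun x => ?_
        have hPP : P k (P k x) = P k x := by
          conv_rhs => rw [← hED.proj k hk]
          rfl
        have h1 : P k (x - P k x) = 0 := by rw [map_sub, hPP, sub_self]
        have h2 : Q k (x - P k x) = 0 :=
          projCLM_right (hcompl k hk) (LinearMap.mem_ker.2 h1)
        rw [map_sub] at h2
        calc (Q k ∘L P k) x = Q k (P k x) := rfl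
          _ = Q k x := by
              have := sub_eq_zero.1 h2
              exact this.symm
      set B : ℝ := K + K ^ 2 * ‖(1 : Euc n →L[ℝ] Euc n) - Q 0‖ with hBdef
      have hB0 : 0 ≤ B := by
        have : (0:ℝ) ≤ K ^ 2 * ‖(1 : Euc n →L[ℝ] Euc n) - Q 0‖ :=
          mul_nonneg (sq_nonneg K) (norm_nonneg _)
        rw [hBdef]; linarith
      have hQnorm : ∀ k : ℤ, k ≤ 0 → ‖Q k‖ ≤ B := by
        intro k hk
        refine ContinuousLinearMap.opNorm_le_bound _ hB0 fun x => ?_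
        set v : Euc n := P k x - Q k x with hv
        have hQQ : Q k (Q k x) = Q k x := by
          conv_rhs => rw [← hQproj k hk]
          rfl
        have hQPx : Q k (P k x) = Q k x := by
          conv_rhs => rw [← hQP k hk]
          rfl
        have h1 : Q k v = 0 := by rw [hv, map_sub, hQPx, hQQ, sub_self]
        have hvK : v ∈ LinearMap.ker (P k : Euc n →ₗ[ℝ] Euc n) := by
          rw [← hQker k hk]; exact LinearMap.mem_ker.2 h1
        have h2 := (hΨ k hk 0 (le_refl (0:ℤ)) hk).1 v hvK
        have h3 : Phi A 0 k v ∈ LinearMap.ker (P 0 : Euc n →ₗ[ℝ] Euc n) := ED.mapsTo_ker hED hk le_rfl hvK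
        have h4 : (1 - P 0) (Phi A 0 k v) = Phi A 0 k v := by
          have : P 0 (Phi A 0 k v) = 0 := LinearMap.mem_ker.1 h3
          simp [ContinuousLinearMap.sub_apply, this]
        have h5 := (hΨ k hk 0 (le_refl (0:ℤ)) hk).2.2
        have hexp1 : Real.exp (-α * ((0 : ℤ) - (k : ℤ) : ℝ)) ≤ 1 := by
          rw [Real.exp_le_one_iff]
          have hkr : (k : ℝ) ≤ 0 := by exact_mod_cast hk
          push_cast
          nlinarith [hED.alpha_pos]
        have h6 : ‖v‖ ≤ K * ‖Phi A 0 k v‖ := by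
          calc ‖v‖ = ‖Ψ k 0 ((1 - P 0) (Phi A 0 k v))‖ := by rw [h4, h2]
            _ = ‖(Ψ k 0 ∘L (1 - P 0)) (Phi A 0 k v)‖ := rfl
            _ ≤ ‖Ψ k 0 ∘L (1 - P 0)‖ * ‖Phi A 0 k v‖ := ContinuousLinearMap.le_opNorm _ _
            _ ≤ (K * Real.exp (-α * ((0 : ℤ) - (k : ℤ) : ℝ))) * ‖Phi A 0 k v‖ :=
                mul_le_mul_of_nonneg_right h5 (norm_nonneg _)
            _ = (K * ‖Phi A 0 k v‖) * Real.exp (-α * ((0 : ℤ) - (k : ℤ) : ℝ)) := by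
                push_cast; ring
            _ ≤ (K * ‖Phi A 0 k v‖) * 1 :=
                mul_le_mul_of_nonneg_left hexp1 (mul_nonneg hK0 (norm_nonneg _))
            _ = K * ‖Phi A 0 k v‖ := mul_one _
        have h7 : Phi A 0 k v = (1 - Q 0) ((Phi A 0 k ∘L P k) x) := by
          have hci := inv_full hQinv1 hk (le_refl (0:ℤ))
          have hq0 : Phi A 0 k (Q k (P k x)) = Q 0 (Phi A 0 k (P k x)) := by
            calc Phi A 0 k (Q k (P k x)) = (Phi A 0 k ∘L Q k) (P k x) := rfl
              _ = (Q 0 ∘L Phi A 0 k) (P k x) := by rw [hci]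
              _ = Q 0 (Phi A 0 k (P k x)) := rfl
          calc Phi A 0 k v = Phi A 0 k (P k x) - Phi A 0 k (Q k x) := by rw [hv, map_sub]
            _ = Phi A 0 k (P k x) - Phi A 0 k (Q k (P k x)) := by rw [hQPx]
            _ = Phi A 0 k (P k x) - Q 0 (Phi A 0 k (P k x)) := by rw [hq0]
            _ = (1 - Q 0) ((Phi A 0 k ∘L P k) x) := by
                simp [ContinuousLinearMap.sub_apply]
        have hfor := hED.forward k hk 0 (le_refl (0:ℤ)) hk
        have h8 : ‖(Phi A 0 k ∘L P k) x‖ ≤ K * ‖x‖ := by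
          calc ‖(Phi A 0 k ∘L P k) x‖ ≤ ‖Phi A 0 k ∘L P k‖ * ‖x‖ :=
              ContinuousLinearMap.le_opNorm _ _
            _ ≤ (K * Real.exp (-α * ((0 : ℤ) - (k : ℤ) : ℝ))) * ‖x‖ := by
                refine mul_le_mul_of_nonneg_right ?_ (norm_nonneg _)
                convert hfor using 3 <;> push_cast <;> ring
            _ = (K * ‖x‖) * Real.exp (-α * ((0 : ℤ) - (k : ℤ) : ℝ)) := by ring
            _ ≤ (K * ‖x‖) * 1 :=
                mul_le_mul_of_nonneg_left hexp1 (mul_nonneg hK0 (norm_nonneg _))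
            _ = K * ‖x‖ := mul_one _
        have h9 : ‖Phi A 0 k v‖ ≤ ‖(1 : Euc n →L[ℝ] Euc n) - Q 0‖ * (K * ‖x‖) := by
          rw [h7]
          calc ‖(1 - Q 0) ((Phi A 0 k ∘L P k) x)‖
              ≤ ‖(1 : Euc n →L[ℝ] Euc n) - Q 0‖ * ‖(Phi A 0 k ∘L P k) x‖ :=
                ContinuousLinearMap.le_opNorm _ _
            _ ≤ ‖(1 : Euc n →L[ℝ] Euc n) - Q 0‖ * (K * ‖x‖) :=
                mul_le_mul_of_nonneg_left h8 (norm_nonneg _)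
        have h10 : P k x - v = Q k x := by rw [hv]; abel
        calc ‖Q k x‖ = ‖P k x - v‖ := by rw [h10]
          _ ≤ ‖P k x‖ + ‖v‖ := norm_sub_le _ _
          _ ≤ K * ‖x‖ + K * (‖(1 : Euc n →L[ℝ] Euc n) - Q 0‖ * (K * ‖x‖)) := by
              refine add_le_add ?_ (h6.trans (mul_le_mul_of_nonneg_left h9 hK0))
              calc ‖P k x‖ ≤ ‖P k‖ * ‖x‖ := ContinuousLinearMap.le_opNorm _ _
                _ ≤ K * ‖x‖ := mul_le_mul_of_nonneg_right (hPnorm k hk) (norm_nonneg _)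
          _ = B * ‖x‖ := by rw [hBdef]; ring
      have hQ1le : ∀ k : ℤ, k ≤ 0 → ‖(1 : Euc n →L[ℝ] Euc n) - Q k‖ ≤ 1 + B := by
        intro k hk
        have h1 : ‖(1 : Euc n →L[ℝ] Euc n)‖ ≤ 1 := ContinuousLinearMap.norm_id_le
        exact (norm_sub_le _ _).trans (add_le_add h1 (hQnorm k hk))
      have hED' : ExpDichotomyOn A {k : ℤ | k ≤ 0} Q (K * (1 + B)) α := by
        refine ⟨?_, hED.alpha_pos, fun k hk => hQproj k hk, ?_, ?_, ?_, ?_, ?_⟩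
        · nlinarith [hED.one_le_K, hB0]
        · intro k hk m hm
          have e1 := rank_nullity_clm (Q k)
          have e2 := rank_nullity_clm (Q m)
          have e3 := rank_nullity_clm (P k)
          have e4 := rank_nullity_clm (P m)
          rw [hQker k hk] at e1
          rw [hQker m hm] at e2
          have e5 := hED.rank_const k hk m hm
          omega
        · intro m hm k hk hmk
          exact inv_full hQinv1 hmk hk
        · intro m hm k hk hmk
          have h1 : Phi A k m ∘L Q m = Q k ∘L (Phi A k m ∘L P m) := by
            calc Phi A k m ∘L Q m = Phi A k m ∘L (Q m ∘L P m) := by rw [hQP m hm]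
              _ = (Phi A k m ∘L Q m) ∘L P m := by rw [ContinuousLinearMap.comp_assoc]
              _ = (Q k ∘L Phi A k m) ∘L P m := by rw [inv_full hQinv1 hmk hk]
              _ = Q k ∘L (Phi A k m ∘L P m) := by rw [ContinuousLinearMap.comp_assoc]
          rw [h1]
          have hexp0 : (0:ℝ) ≤ Real.exp (-α * ((k : ℝ) - (m : ℝ))) := Real.exp_nonneg _
          calc ‖Q k ∘L (Phi A k m ∘L P m)‖ ≤ ‖Q k‖ * ‖Phi A k m ∘L P m‖ :=
              ContinuousLinearMap.opNorm_comp_le _ _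
            _ ≤ B * (K * Real.exp (-α * ((k : ℝ) - (m : ℝ)))) :=
                mul_le_mul (hQnorm k hk) (hED.forward m hm k hk hmk) (norm_nonneg _) hB0
            _ ≤ (K * (1 + B)) * Real.exp (-α * ((k : ℝ) - (m : ℝ))) := by
                nlinarith [mul_nonneg hK0 hexp0]
        · intro k hk hk1
          rw [hQker k hk, hQker (k + 1) hk1]
          exact hED.bijOn k hk hk1
        · refine ⟨Ψ, ?_⟩
          intro m hm k hk hmk
          obtain ⟨hb1, hb2, hb3⟩ := hΨ m hm k hk hmk
          refine ⟨?_, ?_, ?_⟩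
          · intro x hx
            exact hb1 x (by rwa [hQker m hm] at hx)
          · intro x hx
            have h := hb2 x (by rwa [hQker k hk] at hx)
            exact ⟨by rw [hQker m hm]; exact h.1, h.2⟩
          · have hQk1 : (1 - P k) ∘L (1 - Q k) = (1 - Q k) := by
              refine ContinuousLinearMap.ext fun x => ?_
              have hQQ : Q k (Q k x) = Q k x := by
                conv_rhs => rw [← hQproj k hk]
                rfl
              have hxk : (1 - Q k) x ∈ LinearMap.ker (P k : Euc n →ₗ[ℝ] Euc n) := by
                rw [← hQker k hk]
                refine LinearMap.mem_ker.2 ?_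
                simp [ContinuousLinearMap.sub_apply, map_sub, hQQ]
              have hPx : P k ((1 - Q k) x) = 0 := LinearMap.mem_ker.1 hxk
              have e1 : ((1 - P k) ∘L (1 - Q k)) x = (1 - Q k) x - P k ((1 - Q k) x) := by
                simp only [ContinuousLinearMap.comp_apply, ContinuousLinearMap.sub_apply,
                  ContinuousLinearMap.one_apply, map_sub]
                abel
              rw [e1, hPx, sub_zero]
            calc ‖Ψ m k ∘L (1 - Q k)‖
                = ‖(Ψ m k ∘L (1 - P k)) ∘L (1 - Q k)‖ := by
                  rw [ContinuousLinearMap.comp_assoc, hQk1]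
              _ ≤ ‖Ψ m k ∘L (1 - P k)‖ * ‖(1 : Euc n →L[ℝ] Euc n) - Q k‖ :=
                  ContinuousLinearMap.opNorm_comp_le _ _
              _ ≤ (K * Real.exp (-α * ((k : ℝ) - (m : ℝ)))) * (1 + B) :=
                  mul_le_mul hb3 (hQ1le k hk) (norm_nonneg _)
                    (mul_nonneg hK0 (Real.exp_nonneg _))
              _ = (K * (1 + B)) * Real.exp (-α * ((k : ℝ) - (m : ℝ))) := by ring
      exact ⟨Q, hQinv1, (hQrange 0 le_rfl).trans (Sk_zero A W),
        ⟨K * (1 + B), α, hED'⟩, fun k hk => hQker k hk⟩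
    · -- uniqueness
      intro Q Q' hQpack hQ'pack k hk
      obtain ⟨hQ1, hQr, KQ, αQ, hQED⟩ := hQpack
      obtain ⟨hQ'1, hQ'r, KQ', αQ', hQ'ED⟩ := hQ'pack
      have keyr : ∀ (R : ℤ → (Euc n →L[ℝ] Euc n)),
          (∀ j : ℤ, j + 1 ≤ 0 → R (j + 1) ∘L A j = A j ∘L R j) →
          LinearMap.range (R 0 : Euc n →ₗ[ℝ] Euc n) = W →
          (∀ K' α' : ℝ, True) →
          ∀ (KR αR : ℝ), ExpDichotomyOn A {k : ℤ | k ≤ 0} R KR αR →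
          LinearMap.ker (R k : Euc n →ₗ[ℝ] Euc n) = LinearMap.ker (P k : Euc n →ₗ[ℝ] Euc n) ∧
            LinearMap.range (R k : Euc n →ₗ[ℝ] Euc n) = Sk A W k := by
        intro R h1 hr _ KR αR hRED
        have hker : LinearMap.ker (R k : Euc n →ₗ[ℝ] Euc n) = LinearMap.ker (P k : Euc n →ₗ[ℝ] Euc n) :=
          SetLike.ext fun x => (ker_char hRED hk x).trans ((ker_char hED hk x).symm)
        refine ⟨hker, ?_⟩
        have hle : LinearMap.range (R k : Euc n →ₗ[ℝ] Euc n) ≤ Sk A W k := by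
          rintro y ⟨x, rfl⟩
          rw [mem_Sk]
          have hci := inv_full h1 hk (le_refl (0:ℤ))
          have : Phi A 0 k (R k x) = R 0 (Phi A 0 k x) := by
            calc Phi A 0 k (R k x) = (Phi A 0 k ∘L R k) x := rfl
              _ = (R 0 ∘L Phi A 0 k) x := by rw [hci]
              _ = R 0 (Phi A 0 k x) := rfl
          rw [ContinuousLinearMap.coe_coe, this, ← hr]
          exact ⟨Phi A 0 k x, rfl⟩
        have e1 := rank_nullity_clm (R k)
        have e2 : Module.finrank ℝ (Sk A W k) + Module.finrank ℝ (LinearMap.ker (P k : Euc n →ₗ[ℝ] Euc n)) = n := by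
          have := Submodule.finrank_add_eq_of_isCompl (hcompl k hk)
          simpa using this
        rw [hker] at e1
        exact Submodule.eq_of_le_of_finrank_eq hle (by omega)
      obtain ⟨hkerQ, hrangeQ⟩ := keyr Q hQ1 hQr (fun _ _ => trivial) KQ αQ hQED
      obtain ⟨hkerQ', hrangeQ'⟩ := keyr Q' hQ'1 hQ'r (fun _ _ => trivial) KQ' αQ' hQ'ED
      exact proj_ext (hQED.proj k hk) (hQ'ED.proj k hk)
        (hrangeQ.trans hrangeQ'.symm) (hkerQ.trans hkerQ'.symm)

end
end

section
/- Suppose the equation x(k+1) = A(k)x(k) has an exponential dichotomy on all of ℤ with projection P(k) and also an exponential dichotomy on ℤ with projection Q(k). Then the projection is uniquely determined: P(k) = Q(k) for every k ∈ ℤ. -/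
noncomputable section

open scoped BigOperators

lemma Phi_self {n : ℕ} (A : ℤ → (Euc n →L[ℝ] Euc n)) (k : ℤ) : Phi A k k = 1 := by
  simp [Phi]

lemma Phi_succ {n : ℕ} (A : ℤ → (Euc n →L[ℝ] Euc n)) {k m : ℤ} (h : m ≤ k) :
    Phi A (k+1) m = A k ∘L Phi A k m := by
  have hN : (k + 1 - m).toNat = (k - m).toNat + 1 := by omega
  unfold Phi
  rw [hN, List.range_succ]
  simp
  have h2 : (k - m) ⊔ 0 = k - m := sup_eq_left.mpr (by omega)
  have h3 : m + (k - m) = k := by omega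
  rw [h2, h3]
  rfl

lemma Phi_comp {n : ℕ} (A : ℤ → (Euc n →L[ℝ] Euc n)) {k l m : ℤ} (h1 : m ≤ l) (h2 : l ≤ k) :
    Phi A k m = Phi A k l ∘L Phi A l m := by
  have key : ∀ N : ℕ, Phi A (l + N) m = Phi A (l + N) l ∘L Phi A l m := by
    intro N
    induction N with
    | zero => simp [Phi_self, ContinuousLinearMap.one_def]
    | succ N ih =>
        have hl : l ≤ l + N := by omega
        have : (l : ℤ) + (N + 1 : ℕ) = (l + N) + 1 := by push_cast; ring
        rw [this, Phi_succ A (h1.trans hl), Phi_succ A hl, ih,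
          ContinuousLinearMap.comp_assoc]
  have : k = l + ((k - l).toNat : ℤ) := by omega
  rw [this, key]


lemma exp_le_one_aux {a b α : ℝ} (h : a ≤ b) (hα : 0 < α) :
    Real.exp (-α * (b - a)) ≤ 1 := by
  have h0 : -α * (b - a) ≤ 0 := by nlinarith
  calc Real.exp (-α * (b - a)) ≤ Real.exp 0 := Real.exp_le_exp.mpr h0
    _ = 1 := Real.exp_zero

/-- If a vector's norm is dominated by `C * exp (-α N)` for all naturals `N`, it is zero. -/
lemma eq_zero_of_norm_le_exp {n : ℕ} (v : Euc n) (C α : ℝ) (hα : 0 < α)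
    (h : ∀ N : ℕ, ‖v‖ ≤ C * Real.exp (-α * N)) : v = 0 := by
  have hexp : ∀ N : ℕ, Real.exp (-α * N) = Real.exp (-α) ^ N := by
    intro N
    rw [← Real.exp_nat_mul]
    ring_nf
  have hlt : Real.exp (-α) < 1 := Real.exp_lt_one_iff.mpr (by linarith)
  have hpos : (0:ℝ) ≤ Real.exp (-α) := (Real.exp_pos _).le
  have htend : Filter.Tendsto (fun N : ℕ => C * Real.exp (-α) ^ N)
      Filter.atTop (nhds 0) := by
    have := tendsto_pow_atTop_nhds_zero_of_lt_one hpos hlt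
    simpa using this.const_mul C
  have hle : ‖v‖ ≤ 0 := by
    refine ge_of_tendsto' htend fun N => ?_
    rw [← hexp]; exact h N
  simpa using le_antisymm hle (norm_nonneg v)

/-- Range characterisation: `x` is fixed by `P k` iff the forward orbit of `x` is bounded. -/
lemma dich_range {n : ℕ} {A P : ℤ → (Euc n →L[ℝ] Euc n)} {K α : ℝ}
    (hP : ExpDichotomyOn A Set.univ P K α) (k : ℤ) (x : Euc n) :
    P k x = x ↔ ∃ C, ∀ m, k ≤ m → ‖Phi A m k x‖ ≤ C := by
  have hK0 : (0:ℝ) ≤ K := le_trans zero_le_one hP.one_le_K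
  have hfwd : ∀ m : ℤ, k ≤ m → ∀ z : Euc n, ‖Phi A m k (P k z)‖ ≤ K * ‖z‖ := by
    intro m hm z
    have hcast : (k:ℝ) ≤ (m:ℝ) := by exact_mod_cast hm
    have hexp : Real.exp (-α * ((m:ℝ) - k)) ≤ 1 := exp_le_one_aux hcast hP.alpha_pos
    calc ‖Phi A m k (P k z)‖ = ‖(Phi A m k ∘L P k) z‖ := by
          simp [ContinuousLinearMap.comp_apply]
      _ ≤ ‖Phi A m k ∘L P k‖ * ‖z‖ := ContinuousLinearMap.le_opNorm _ _
      _ ≤ (K * Real.exp (-α * ((m:ℝ) - k))) * ‖z‖ :=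
          mul_le_mul_of_nonneg_right (hP.forward k trivial m trivial hm) (norm_nonneg z)
      _ ≤ K * ‖z‖ :=
          mul_le_mul_of_nonneg_right (mul_le_of_le_one_right hK0 hexp) (norm_nonneg z)
  constructor
  · intro hx
    exact ⟨K * ‖x‖, fun m hm => by have h := hfwd m hm x; rwa [hx] at h⟩
  · rintro ⟨C, hC⟩
    obtain ⟨Ψ, hΨ⟩ := hP.backward
    set v := x - P k x with hv
    have hPv : P k v = 0 := by
      have hp := DFunLike.congr_fun (hP.proj k trivial) x
      simp only [ContinuousLinearMap.comp_apply] at hp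
      simp [hv, map_sub, hp]
    have hvzero : v = 0 := by
      apply eq_zero_of_norm_le_exp v (K * (C + K * ‖x‖)) α hP.alpha_pos
      intro N
      set m := k + (N : ℤ) with hm
      have hkm : k ≤ m := by omega
      obtain ⟨hb1, hb2, hb3⟩ := hΨ k trivial m trivial hkm
      have hker : P m (Phi A m k v) = 0 := by
        have hinv := DFunLike.congr_fun (hP.invariance k trivial m trivial hkm) v
        simp only [ContinuousLinearMap.comp_apply] at hinv
        rw [← hinv, hPv, map_zero]
      have hfix : Ψ k m (Phi A m k v) = v := hb1 v (by simpa [LinearMap.mem_ker] using hPv)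
      have hone : (1 - P m) (Phi A m k v) = Phi A m k v := by
        simp [ContinuousLinearMap.sub_apply, hker]
      have hveq : v = (Ψ k m ∘L (1 - P m)) (Phi A m k v) := by
        rw [ContinuousLinearMap.comp_apply, hone, hfix]
      have hbv : ‖Phi A m k v‖ ≤ C + K * ‖x‖ := by
        calc ‖Phi A m k v‖ = ‖Phi A m k x - Phi A m k (P k x)‖ := by rw [hv, map_sub]
          _ ≤ ‖Phi A m k x‖ + ‖Phi A m k (P k x)‖ := norm_sub_le _ _
          _ ≤ C + K * ‖x‖ := add_le_add (hC m hkm) (hfwd m hkm x)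
      have hKe : (0:ℝ) ≤ K * Real.exp (-α * ((m:ℝ) - k)) := by positivity
      calc ‖v‖ = ‖(Ψ k m ∘L (1 - P m)) (Phi A m k v)‖ := by rw [← hveq]
        _ ≤ ‖Ψ k m ∘L (1 - P m)‖ * ‖Phi A m k v‖ := ContinuousLinearMap.le_opNorm _ _
        _ ≤ (K * Real.exp (-α * ((m:ℝ) - k))) * (C + K * ‖x‖) :=
            mul_le_mul hb3 hbv (norm_nonneg _) hKe
        _ = K * (C + K * ‖x‖) * Real.exp (-α * (N:ℝ)) := by
            have hc : ((m:ℝ) - k) = (N:ℝ) := by rw [hm]; push_cast; ring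
            rw [hc]; ring
    have hx0 : x - P k x = 0 := hvzero
    have := sub_eq_zero.mp hx0
    exact this.symm

/-- Kernel characterisation: `P k x = 0` iff there is a bounded backward orbit through `x`. -/
lemma dich_ker {n : ℕ} {A P : ℤ → (Euc n →L[ℝ] Euc n)} {K α : ℝ}
    (hP : ExpDichotomyOn A Set.univ P K α) (k : ℤ) (x : Euc n) :
    P k x = 0 ↔ ∃ C, ∀ m, m ≤ k → ∃ y, Phi A k m y = x ∧ ‖y‖ ≤ C := by
  have hK0 : (0:ℝ) ≤ K := le_trans zero_le_one hP.one_le_K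
  obtain ⟨Ψ, hΨ⟩ := hP.backward
  constructor
  · intro hx
    refine ⟨K * ‖x‖, fun m hm => ?_⟩
    obtain ⟨hb1, hb2, hb3⟩ := hΨ m trivial k trivial hm
    obtain ⟨hker, heq⟩ := hb2 x (by simpa [LinearMap.mem_ker] using hx)
    refine ⟨Ψ m k x, heq, ?_⟩
    have hcast : (m:ℝ) ≤ (k:ℝ) := by exact_mod_cast hm
    have hexp : Real.exp (-α * ((k:ℝ) - m)) ≤ 1 := exp_le_one_aux hcast hP.alpha_pos
    have hone : (1 - P k) x = x := by simp [ContinuousLinearMap.sub_apply, hx]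
    calc ‖Ψ m k x‖ = ‖(Ψ m k ∘L (1 - P k)) x‖ := by
          rw [ContinuousLinearMap.comp_apply, hone]
      _ ≤ ‖Ψ m k ∘L (1 - P k)‖ * ‖x‖ := ContinuousLinearMap.le_opNorm _ _
      _ ≤ (K * Real.exp (-α * ((k:ℝ) - m))) * ‖x‖ :=
          mul_le_mul_of_nonneg_right hb3 (norm_nonneg x)
      _ ≤ K * ‖x‖ :=
          mul_le_mul_of_nonneg_right (mul_le_of_le_one_right hK0 hexp) (norm_nonneg x)
  · rintro ⟨C, hC⟩
    have hCnn : 0 ≤ C := by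
      obtain ⟨y, _, hy⟩ := hC k le_rfl
      exact le_trans (norm_nonneg _) hy
    apply eq_zero_of_norm_le_exp (P k x) (K * C) α hP.alpha_pos
    intro N
    set m := k - (N : ℤ) with hm
    have hmk : m ≤ k := by omega
    obtain ⟨y, hy1, hy2⟩ := hC m hmk
    have hinv := DFunLike.congr_fun (hP.invariance m trivial k trivial hmk) y
    simp only [ContinuousLinearMap.comp_apply] at hinv
    have hx : P k x = (Phi A k m ∘L P m) y := by
      rw [ContinuousLinearMap.comp_apply, ← hy1]
      exact hinv.symm
    rw [hx]
    calc ‖(Phi A k m ∘L P m) y‖ ≤ ‖Phi A k m ∘L P m‖ * ‖y‖ :=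
          ContinuousLinearMap.le_opNorm _ _
      _ ≤ (K * Real.exp (-α * ((k:ℝ) - m))) * C :=
          mul_le_mul (hP.forward m trivial k trivial hmk) hy2 (norm_nonneg y)
            (by positivity)
      _ = K * C * Real.exp (-α * (N:ℝ)) := by
          have hc : ((k:ℝ) - m) = (N:ℝ) := by rw [hm]; push_cast; ring
          rw [hc]; ring

/-- for an exponential dichotomy on all of `ℤ` the projection family is
uniquely determined. -/
theorem statement6 {n : ℕ} (A P Q : ℤ → (Euc n →L[ℝ] Euc n)) (K α K' α' : ℝ)
    (hP : ExpDichotomyOn A Set.univ P K α)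
    (hQ : ExpDichotomyOn A Set.univ Q K' α') :
    ∀ k : ℤ, P k = Q k := by
  intro k
  refine ContinuousLinearMap.ext fun x => ?_
  have hfix : Q k (P k x) = P k x := by
    apply (dich_range hQ k (P k x)).mpr
    apply (dich_range hP k (P k x)).mp
    have hp := DFunLike.congr_fun (hP.proj k trivial) x
    simpa [ContinuousLinearMap.comp_apply] using hp
  have hkill : Q k (x - P k x) = 0 := by
    apply (dich_ker hQ k (x - P k x)).mpr
    apply (dich_ker hP k (x - P k x)).mp
    have hp := DFunLike.congr_fun (hP.proj k trivial) x
    simp only [ContinuousLinearMap.comp_apply] at hp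
    simp [map_sub, hp]
  have h1 : Q k x - Q k (P k x) = 0 := by rw [← map_sub, hkill]
  rw [hfix] at h1
  exact (sub_eq_zero.mp h1).symm
end
end
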